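/- Let (c_j) be the exact Chebyshev coefficients of f (absolutely summable), (c_{j,n}) the n-point quadrature coefficients satisfying the aliasing identity c_{m,n} = c_m + Σ_{j=1}^∞ (−1)^j (c_{2jn−m} + c_{2jn+m}) for 0 ≤ m < 2n. Let n_p, n_q ≥ 1 and d = n_p + n_q. If d = n − l with 1 ≤ l ≤ n, then Σ_{i=1}^{n_q} |c_{n_p+i,n}| ≤ Σ_{i=n_p+1}^∞ |c_i|. -/

import Mathlib

private lemma two_mul_le_aux {j n : ℕ} : 2 * n ≤ 2 * (j + 1) * n := by
  calc 2 * n = 2 * 1 * n := by ring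
  _ ≤ 2 * (j + 1) * n := Nat.mul_le_mul_right n (by omega)

private lemma step_mul_aux {j j' n : ℕ} (h : j < j') :
    2 * (j + 1) * n + 2 * n ≤ 2 * (j' + 1) * n := by
  calc 2 * (j + 1) * n + 2 * n = (2 * (j + 1) + 2) * n := by ring
  _ ≤ 2 * (j' + 1) * n := Nat.mul_le_mul_right n (by omega)

/-- the aliased index map -/
private def aliasIdx (n m : ℕ) : Bool × ℕ → ℕ
  | (false, j) => 2 * (j + 1) * n - m
  | (true, j) => 2 * (j + 1) * n + m

private lemma aliasIdx_inj {n m m' : ℕ} (hn : 1 ≤ n) (hm1 : 1 ≤ m) (hm2 : m < n)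
    (hm1' : 1 ≤ m') (hm2' : m' < n) {q q' : Bool × ℕ}
    (h : aliasIdx n m q = aliasIdx n m' q') : q = q' ∧ m = m' := by
  obtain ⟨b, j⟩ := q
  obtain ⟨b', j'⟩ := q'
  have hX : 2 * n ≤ 2 * (j + 1) * n := two_mul_le_aux
  have hY : 2 * n ≤ 2 * (j' + 1) * n := two_mul_le_aux
  rcases Nat.lt_trichotomy j j' with hj | hj | hj
  · have hs := step_mul_aux (n := n) hj
    cases b <;> cases b' <;> simp only [aliasIdx] at h <;> omega
  · subst hj
    cases b <;> cases b' <;> simp only [aliasIdx] at h <;> simp_all <;> omega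
  · have hs := step_mul_aux (n := n) hj
    cases b <;> cases b' <;> simp only [aliasIdx] at h <;> omega

private lemma aliasIdx_ge {n m : ℕ} (hm2 : m < n) (q : Bool × ℕ) :
    n + 1 ≤ aliasIdx n m q := by
  obtain ⟨b, j⟩ := q
  have hX : 2 * n ≤ 2 * (j + 1) * n := two_mul_le_aux
  cases b <;> simp only [aliasIdx] <;> omega

/-- Bound on the aliased coefficient sum, case `d = n_p + n_q = n - l`,
`1 ≤ l ≤ n`: `Σ_{i=1}^{n_q} |c_{n_p+i,n}| ≤ Σ_{i=n_p+1}^∞ |c_i|`. -/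
theorem aliased_coeff_sum_bound_low (c c' : ℕ → ℝ) (n : ℕ) (hn : 1 ≤ n)
    (hsum : Summable fun j => |c j|)
    (halias : ∀ m : ℕ, m < 2 * n →
      c' m = c m + ∑' j : ℕ, (-1 : ℝ) ^ (j + 1) *
        (c (2 * (j + 1) * n - m) + c (2 * (j + 1) * n + m)))
    (np nq : ℕ) (hnp : 1 ≤ np) (hnq : 1 ≤ nq) (d : ℕ) (hdef : d = np + nq)
    (l : ℕ) (hl1 : 1 ≤ l) (hln : l ≤ n) (hd : d = n - l) :
    (∑ i ∈ Finset.Icc 1 nq, |c' (np + i)|) ≤ ∑' i : ℕ, |c (np + 1 + i)| := by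
  have hnd : np + nq + 1 ≤ n := by omega
  set g : ℕ → ℝ := fun k => |c k| with hg
  have hg0 : ∀ k, 0 ≤ g k := fun k => abs_nonneg _
  -- summability of the two aliased families
  have hsub : ∀ m : ℕ, m < 2 * n → Summable (fun j : ℕ => g (2 * (j + 1) * n - m)) := by
    intro m hm
    apply hsum.comp_injective
    intro j j' h
    simp only at h
    have hX : 2 * n ≤ 2 * (j + 1) * n := two_mul_le_aux
    have hY : 2 * n ≤ 2 * (j' + 1) * n := two_mul_le_aux
    rcases Nat.lt_trichotomy j j' with hj | hj | hj
    · have hs := step_mul_aux (n := n) hj; omega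
    · exact hj
    · have hs := step_mul_aux (n := n) hj; omega
  have hadd : ∀ m : ℕ, Summable (fun j : ℕ => g (2 * (j + 1) * n + m)) := by
    intro m
    apply hsum.comp_injective
    intro j j' h
    simp only at h
    rcases Nat.lt_trichotomy j j' with hj | hj | hj
    · have hs := step_mul_aux (n := n) hj; omega
    · exact hj
    · have hs := step_mul_aux (n := n) hj; omega
  -- pointwise bound on |c' m|
  have key : ∀ m : ℕ, np + 1 ≤ m → m ≤ np + nq →
      |c' m| ≤ g m + ((∑' j : ℕ, g (2 * (j + 1) * n - m)) +
        ∑' j : ℕ, g (2 * (j + 1) * n + m)) := by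
    intro m hm1 hm2
    have hmn : m < 2 * n := by omega
    have h1 := hsub m hmn
    have h2 := hadd m
    have habs : ∀ j : ℕ, |(-1 : ℝ) ^ (j + 1) *
        (c (2 * (j + 1) * n - m) + c (2 * (j + 1) * n + m))|
        ≤ g (2 * (j + 1) * n - m) + g (2 * (j + 1) * n + m) := by
      intro j
      rw [abs_mul, abs_pow, abs_neg, abs_one, one_pow, one_mul]
      exact abs_add_le _ _
    have hterm : Summable (fun j : ℕ => |(-1 : ℝ) ^ (j + 1) *
        (c (2 * (j + 1) * n - m) + c (2 * (j + 1) * n + m))|) :=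
      Summable.of_nonneg_of_le (fun j => abs_nonneg _) habs (h1.add h2)
    have habs2 : |∑' j : ℕ, (-1 : ℝ) ^ (j + 1) *
        (c (2 * (j + 1) * n - m) + c (2 * (j + 1) * n + m))|
        ≤ ∑' j : ℕ, |(-1 : ℝ) ^ (j + 1) *
          (c (2 * (j + 1) * n - m) + c (2 * (j + 1) * n + m))| := by
      have h := norm_tsum_le_tsum_norm (f := fun j : ℕ => (-1 : ℝ) ^ (j + 1) *
        (c (2 * (j + 1) * n - m) + c (2 * (j + 1) * n + m)))
        (by simpa only [Real.norm_eq_abs] using hterm)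
      simpa only [Real.norm_eq_abs] using h
    have habs3 := Summable.tsum_le_tsum habs hterm (h1.add h2)
    have heq : (∑' j : ℕ, (g (2 * (j + 1) * n - m) + g (2 * (j + 1) * n + m)))
        = (∑' j : ℕ, g (2 * (j + 1) * n - m)) + ∑' j : ℕ, g (2 * (j + 1) * n + m) :=
      Summable.tsum_add h1 h2
    have h4 : |c' m| ≤ |c m| + |∑' j : ℕ, (-1 : ℝ) ^ (j + 1) *
        (c (2 * (j + 1) * n - m) + c (2 * (j + 1) * n + m))| := by
      rw [halias m hmn]; exact abs_add_le _ _
    rw [heq] at habs3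
    calc |c' m| ≤ _ := h4
      _ ≤ g m + ((∑' j : ℕ, g (2 * (j + 1) * n - m)) +
          ∑' j : ℕ, g (2 * (j + 1) * n + m)) :=
        add_le_add le_rfl (habs2.trans habs3)
  -- split the right-hand side
  have hRs : Summable (fun i : ℕ => g (np + 1 + i)) :=
    hsum.comp_injective (fun a b h => by simpa using h)
  have hsplit : (∑ i ∈ Finset.range nq, g (np + 1 + i)) +
      (∑' i : ℕ, g (np + 1 + (i + nq))) = ∑' i : ℕ, g (np + 1 + i) :=
    Summable.sum_add_tsum_nat_add nq hRs
  -- first part matches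
  have hA : (∑ i ∈ Finset.Icc 1 nq, g (np + i)) = ∑ i ∈ Finset.range nq, g (np + 1 + i) := by
    apply Finset.sum_nbij' (fun i => i - 1) (fun i => i + 1)
    · intro a ha; simp only [Finset.mem_Icc] at ha; simp only [Finset.mem_range]; omega
    · intro a ha; simp only [Finset.mem_range] at ha; simp only [Finset.mem_Icc]; omega
    · intro a ha; simp only [Finset.mem_Icc] at ha; omega
    · intro a ha; omega
    · intro a ha; simp only [Finset.mem_Icc] at ha; congr 1; omega
  -- the injection for the aliased part
  set α := ↥(Finset.Icc 1 nq) × (Bool × ℕ) with hα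
  set E : α → ℕ := fun p => aliasIdx n (np + (p.1 : ℕ)) p.2 with hE
  have hmem : ∀ i : ↥(Finset.Icc 1 nq), 1 ≤ (i : ℕ) ∧ (i : ℕ) ≤ nq := by
    intro i
    have := i.2
    simp only [Finset.mem_Icc] at this
    exact this
  have hEinj : Function.Injective E := by
    intro p p' h
    obtain ⟨h1, h2⟩ := hmem p.1
    obtain ⟨h1', h2'⟩ := hmem p'.1
    have := aliasIdx_inj hn (m := np + (p.1 : ℕ)) (m' := np + (p'.1 : ℕ))
      (by omega) (by omega) (by omega) (by omega) h
    obtain ⟨hq, hm⟩ := this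
    have : (p.1 : ℕ) = (p'.1 : ℕ) := by omega
    exact Prod.ext (Subtype.ext this) hq
  have hEge : ∀ p : α, np + nq + 1 ≤ E p := by
    intro p
    obtain ⟨h1, h2⟩ := hmem p.1
    have h2 := aliasIdx_ge (n := n) (m := np + (p.1 : ℕ)) (by omega) p.2
    have h3 : E p = aliasIdx n (np + (p.1 : ℕ)) p.2 := rfl
    omega
  have hEsum : Summable (fun p : α => g (E p)) := hsum.comp_injective hEinj
  -- tsum over α bounded by the tail
  have hTail : Summable (fun i : ℕ => g (np + 1 + (i + nq))) :=
    hsum.comp_injective (fun a b h => by simpa using h)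
  have hB : (∑' p : α, g (E p)) ≤ ∑' i : ℕ, g (np + 1 + (i + nq)) := by
    apply Summable.tsum_le_tsum_of_inj (fun p : α => E p - (np + nq + 1))
    · intro p p' h
      have := hEge p
      have := hEge p'
      apply hEinj
      simp only at h
      omega
    · intro k _; exact hg0 _
    · intro p
      have := hEge p
      have : np + 1 + (E p - (np + nq + 1) + nq) = E p := by omega
      rw [this]
    · exact hEsum
    · exact hTail
  -- compute the tsum over α as the sum of the two families
  have hC : (∑' p : α, g (E p)) = ∑ i ∈ Finset.Icc 1 nq,
      ((∑' j : ℕ, g (2 * (j + 1) * n - (np + i))) +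
        ∑' j : ℕ, g (2 * (j + 1) * n + (np + i))) := by
    rw [Summable.tsum_prod' hEsum (fun b => hEsum.prod_factor b)]
    have hfact : ∀ i : ↥(Finset.Icc 1 nq),
        (∑' q : Bool × ℕ, g (aliasIdx n (np + (i : ℕ)) q)) =
        (∑' j : ℕ, g (2 * (j + 1) * n - (np + (i : ℕ)))) +
          ∑' j : ℕ, g (2 * (j + 1) * n + (np + (i : ℕ))) := by
      intro i
      have hs : Summable (fun q : Bool × ℕ => g (aliasIdx n (np + (i : ℕ)) q)) :=
        hEsum.prod_factor i
      rw [Summable.tsum_prod' hs (fun b => hs.prod_factor b), tsum_bool]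
      simp only [aliasIdx]
    calc (∑' (i : ↥(Finset.Icc 1 nq)) (q : Bool × ℕ), g (E (i, q)))
        = ∑' i : ↥(Finset.Icc 1 nq),
          ((∑' j : ℕ, g (2 * (j + 1) * n - (np + (i : ℕ)))) +
            ∑' j : ℕ, g (2 * (j + 1) * n + (np + (i : ℕ)))) := by
          exact tsum_congr hfact
      _ = _ := Finset.tsum_subtype (Finset.Icc 1 nq) (fun i =>
          (∑' j : ℕ, g (2 * (j + 1) * n - (np + i))) +
            ∑' j : ℕ, g (2 * (j + 1) * n + (np + i)))
  -- assemble
  calc (∑ i ∈ Finset.Icc 1 nq, |c' (np + i)|)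
      ≤ ∑ i ∈ Finset.Icc 1 nq, (g (np + i) +
          ((∑' j : ℕ, g (2 * (j + 1) * n - (np + i))) +
            ∑' j : ℕ, g (2 * (j + 1) * n + (np + i)))) := by
        apply Finset.sum_le_sum
        intro i hi
        simp only [Finset.mem_Icc] at hi
        exact key (np + i) (by omega) (by omega)
    _ = (∑ i ∈ Finset.Icc 1 nq, g (np + i)) + ∑ i ∈ Finset.Icc 1 nq,
          ((∑' j : ℕ, g (2 * (j + 1) * n - (np + i))) +
            ∑' j : ℕ, g (2 * (j + 1) * n + (np + i))) := Finset.sum_add_distrib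
    _ ≤ (∑ i ∈ Finset.range nq, g (np + 1 + i)) + ∑' i : ℕ, g (np + 1 + (i + nq)) := by
        rw [hA, ← hC]
        exact add_le_add_right hB _
    _ = ∑' i : ℕ, g (np + 1 + i) := hsplit
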